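/- Let s_1, …, s_m form a greedy sequence in E with threshold 1, and suppose that every edge of E overlaps some edge of s_1 ∪ … ∪ s_m (the greedy procedure exhausted the graph). Then ALG := s_1 ∪ … ∪ s_m is a consecutive matching in E and for every consecutive matching O in E one has 4·|ALG| ≥ |O| (a 4-approximation of a maximum consecutive matching). -/

import Mathlib

/-- Two edges `(i,j)` and `(i',j')` of the bipartite graph overlap if
`|i - i'| ≤ 1` or `|j - j'| ≤ 1`. -/
def Overlap {n : ℕ} (e e' : Fin n × Fin n) : Prop :=
  ((e.1.val : ℤ) - e'.1.val).natAbs ≤ 1 ∨ ((e.2.val : ℤ) - e'.2.val).natAbs ≤ 1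

instance {n : ℕ} (e e' : Fin n × Fin n) : Decidable (Overlap e e') := by
  unfold Overlap; infer_instance

/-- `M` is a consecutive matching in `E`. -/
def ConsecMatching {n : ℕ} (E M : Finset (Fin n × Fin n)) : Prop :=
  M ⊆ E ∧
  (∀ e ∈ M, ∀ e' ∈ M, e ≠ e' → e.1 ≠ e'.1 ∧ e.2 ≠ e'.2) ∧
  (∀ e ∈ M, ∀ e' ∈ M, e'.1.val = e.1.val + 1 → e'.2.val = e.2.val + 1) ∧
  (∀ e ∈ M, ∀ e' ∈ M, e'.2.val = e.2.val + 1 → e'.1.val = e.1.val + 1)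

/-- `s` is the run of `ℓ` consecutive edges at `(p, q)`,
i.e. `s = {(p+r, q+r) : 0 ≤ r < ℓ}`. -/
def IsRunAt {n : ℕ} (s : Finset (Fin n × Fin n)) (p q ℓ : ℕ) : Prop :=
  p + ℓ ≤ n ∧ q + ℓ ≤ n ∧
  ∀ e : Fin n × Fin n, e ∈ s ↔ ∃ r < ℓ, e.1.val = p + r ∧ e.2.val = q + r

/-- `s` is a run of `ℓ` consecutive edges. -/
def IsRun {n : ℕ} (s : Finset (Fin n × Fin n)) (ℓ : ℕ) : Prop :=
  ∃ p q, IsRunAt s p q ℓ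

/-- `E` contains no run of `k` consecutive edges. -/
def NoRun {n : ℕ} (E : Finset (Fin n × Fin n)) (k : ℕ) : Prop :=
  ¬ ∃ s : Finset (Fin n × Fin n), IsRun s k ∧ s ⊆ E

/-- `s` is a streak of `M`: a run of (at least one) consecutive edges contained in `M`,
maximal under inclusion among runs contained in `M`. -/
def IsStreak {n : ℕ} (M s : Finset (Fin n × Fin n)) : Prop :=
  (∃ ℓ, 1 ≤ ℓ ∧ IsRun s ℓ) ∧ s ⊆ M ∧
  ∀ s' ℓ', IsRun s' ℓ' → s' ⊆ M → s ⊆ s' → s' = s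

/-- `s 0, …, s (m-1)` is a greedy sequence in `E` with threshold `k`:
each `s i` is a run of at least `k` consecutive edges, all of whose edges
overlap no edge of the previously chosen runs, and no run of consecutive
edges all still available at step `i` is longer than `s i`. -/
def GreedySeq {n : ℕ} (E : Finset (Fin n × Fin n)) (k m : ℕ)
    (s : ℕ → Finset (Fin n × Fin n)) : Prop :=
  ∀ i < m,
    s i ⊆ E.filter (fun e => ∀ j < i, ∀ e' ∈ s j, ¬ Overlap e e') ∧
    (∃ ℓ, k ≤ ℓ ∧ IsRun (s i) ℓ) ∧
    (∀ r ℓ, IsRun r ℓ →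
      r ⊆ E.filter (fun e => ∀ j < i, ∀ e' ∈ s j, ¬ Overlap e e') →
      ℓ ≤ (s i).card)

/-- `M` is a `t`-locally-optimal consecutive matching in `E`. -/
def LocallyOptimal {n : ℕ} (E M : Finset (Fin n × Fin n)) (t : ℕ) : Prop :=
  ConsecMatching E M ∧
  ¬ ∃ Erem Eadd : Finset (Fin n × Fin n), Erem ⊆ M ∧ Eadd ⊆ E \ M ∧
      Erem.card < Eadd.card ∧ Eadd.card ≤ t ∧
      ConsecMatching E ((M \ Erem) ∪ Eadd)


section Helpers

lemma pair_ext {n : ℕ} {e e' : Fin n × Fin n} (h1 : e.1.val = e'.1.val)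
    (h2 : e.2.val = e'.2.val) : e = e' :=
  Prod.ext (Fin.ext h1) (Fin.ext h2)

lemma overlap_self {n : ℕ} (e : Fin n × Fin n) : Overlap e e := by
  unfold Overlap; left; omega

lemma overlap_symm {n : ℕ} {e e' : Fin n × Fin n} (h : Overlap e e') : Overlap e' e := by
  unfold Overlap at *; omega

lemma isRunAt_card {n : ℕ} {s : Finset (Fin n × Fin n)} {p q ℓ : ℕ}
    (h : IsRunAt s p q ℓ) : s.card = ℓ := by
  obtain ⟨hp, hq, hmem⟩ := h
  rw [← Finset.card_range ℓ]
  apply Finset.card_bij (fun e _ => e.1.val - p)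
  · intro e he
    obtain ⟨r, hr, h1, h2⟩ := (hmem e).1 he
    simp only [Finset.mem_range]; omega
  · intro e he e' he' hval
    obtain ⟨r, hr, h1, h2⟩ := (hmem e).1 he
    obtain ⟨r', hr', h1', h2'⟩ := (hmem e').1 he'
    exact pair_ext (by omega) (by omega)
  · intro r hr
    simp only [Finset.mem_range] at hr
    refine ⟨(⟨p + r, by omega⟩, ⟨q + r, by omega⟩), (hmem _).2 ⟨r, hr, rfl, rfl⟩, by simp⟩

lemma isRunAt_pair {n : ℕ} {e e' : Fin n × Fin n}
    (h1 : e'.1.val = e.1.val + 1) (h2 : e'.2.val = e.2.val + 1) :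
    IsRunAt {e, e'} e.1.val e.2.val 2 := by
  refine ⟨by have := e'.1.isLt; omega, by have := e'.2.isLt; omega, ?_⟩
  intro x
  simp only [Finset.mem_insert, Finset.mem_singleton]
  constructor
  · rintro (rfl | rfl)
    · exact ⟨0, by omega, by omega, by omega⟩
    · exact ⟨1, by omega, by omega, by omega⟩
  · rintro ⟨r, hr, hx1, hx2⟩
    interval_cases r
    · exact Or.inl (pair_ext (by omega) (by omega))
    · exact Or.inr (pair_ext (by omega) (by omega))

lemma card_le_of_window {α : Type*} {O : Finset α} {f : α → ℕ} {p ℓ : ℕ}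
    (hdist : ∀ e ∈ O, ∀ e' ∈ O, f e = f e' → e = e')
    (hwin : ∀ e ∈ O, p ≤ f e + 1 ∧ f e ≤ p + ℓ) :
    O.card ≤ ℓ + 2 := by
  have h : O.card ≤ (Finset.Icc (p - 1) (p + ℓ)).card := by
    apply Finset.card_le_card_of_injOn f
    · intro e he
      rw [Finset.coe_Icc, Set.mem_Icc]
      have := hwin e he; omega
    · intro e he e' he' h
      exact hdist e he e' he' h
  have hc : (Finset.Icc (p - 1) (p + ℓ)).card = p + ℓ + 1 - (p - 1) := Nat.card_Icc _ _
  omega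

lemma card_le_two_of_window {α : Type*} {O : Finset α} {f : α → ℕ} {p : ℕ}
    (hdist : ∀ e ∈ O, ∀ e' ∈ O, f e = f e' → e = e')
    (hwin : ∀ e ∈ O, p ≤ f e + 1 ∧ f e ≤ p + 1)
    (hcons : ∀ e ∈ O, ∀ e' ∈ O, f e' ≠ f e + 1) :
    O.card ≤ 2 := by
  by_contra h
  push_neg at h
  obtain ⟨a, b, c, ha, hb, hc, hab, hac, hbc⟩ := Finset.two_lt_card_iff.mp h
  have hfab : f a ≠ f b := fun h => hab (hdist a ha b hb h)
  have hfac : f a ≠ f c := fun h => hac (hdist a ha c hc h)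
  have hfbc : f b ≠ f c := fun h => hbc (hdist b hb c hc h)
  have h1 := hwin a ha
  have h2 := hwin b hb
  have h3 := hwin c hc
  have hor : f b = f a + 1 ∨ f a = f b + 1 ∨ f c = f a + 1 ∨ f a = f c + 1 ∨
      f c = f b + 1 ∨ f b = f c + 1 := by omega
  rcases hor with h|h|h|h|h|h
  · exact hcons a ha b hb h
  · exact hcons b hb a ha h
  · exact hcons a ha c hc h
  · exact hcons c hc a ha h
  · exact hcons b hb c hc h
  · exact hcons c hc b hb h

lemma per_index_bound {n : ℕ} {O si Ei : Finset (Fin n × Fin n)} {p q ℓ : ℕ}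
    (hℓ1 : 1 ≤ ℓ)
    (hRA : IsRunAt si p q ℓ)
    (hmax : ∀ r ℓ', IsRun r ℓ' → r ⊆ Ei → ℓ' ≤ si.card)
    (hOm : ∀ e ∈ O, ∀ e' ∈ O, e ≠ e' → e.1 ≠ e'.1 ∧ e.2 ≠ e'.2)
    (hO3 : ∀ e ∈ O, ∀ e' ∈ O, e'.1.val = e.1.val + 1 → e'.2.val = e.2.val + 1)
    (hO4 : ∀ e ∈ O, ∀ e' ∈ O, e'.2.val = e.2.val + 1 → e'.1.val = e.1.val + 1)
    (hOEi : O ⊆ Ei)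
    (hover : ∀ e ∈ O, ∃ e' ∈ si, Overlap e e') :
    O.card ≤ 4 * si.card := by
  have hcard : si.card = ℓ := isRunAt_card hRA
  unfold IsRunAt at hRA
  obtain ⟨hpn, hqn, hm⟩ := hRA
  have hwin : ∀ e ∈ O, (p ≤ e.1.val + 1 ∧ e.1.val ≤ p + ℓ) ∨
      (q ≤ e.2.val + 1 ∧ e.2.val ≤ q + ℓ) := by
    intro e he
    obtain ⟨e', he', hov⟩ := hover e he
    obtain ⟨r, hr, h1, h2⟩ := (hm e').mp he'
    unfold Overlap at hov
    rcases hov with h | h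
    · left; omega
    · right; omega
  have hpair : ∀ e ∈ O, ∀ e' ∈ O, e'.1.val = e.1.val + 1 → 2 ≤ ℓ := by
    intro e he e' he' h1
    have h2 := hO3 e he e' he' h1
    have hsub : ({e, e'} : Finset (Fin n × Fin n)) ⊆ Ei := by
      intro x hx
      rcases Finset.mem_insert.mp hx with rfl | hx
      · exact hOEi he
      · exact hOEi (Finset.mem_singleton.mp hx ▸ he')
    have := hmax {e, e'} 2 ⟨e.1.val, e.2.val, isRunAt_pair h1 h2⟩ hsub
    omega
  set X := O.filter (fun e => p ≤ e.1.val + 1 ∧ e.1.val ≤ p + ℓ) with hXdef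
  set Y := O.filter (fun e => q ≤ e.2.val + 1 ∧ e.2.val ≤ q + ℓ) with hYdef
  have hcover : O ⊆ X ∪ Y := by
    intro e he
    rcases hwin e he with h | h
    · exact Finset.mem_union_left _ (Finset.mem_filter.mpr ⟨he, h⟩)
    · exact Finset.mem_union_right _ (Finset.mem_filter.mpr ⟨he, h⟩)
  have hXO : X ⊆ O := Finset.filter_subset _ _
  have hYO : Y ⊆ O := Finset.filter_subset _ _
  have hXdist : ∀ e ∈ X, ∀ e' ∈ X, e.1.val = e'.1.val → e = e' := by
    intro e he e' he' h
    by_contra hne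
    exact (hOm e (hXO he) e' (hXO he') hne).1 (Fin.ext h)
  have hYdist : ∀ e ∈ Y, ∀ e' ∈ Y, e.2.val = e'.2.val → e = e' := by
    intro e he e' he' h
    by_contra hne
    exact (hOm e (hYO he) e' (hYO he') hne).2 (Fin.ext h)
  have hXwin : ∀ e ∈ X, p ≤ e.1.val + 1 ∧ e.1.val ≤ p + ℓ := by
    intro e he; exact (Finset.mem_filter.mp he).2
  have hYwin : ∀ e ∈ Y, q ≤ e.2.val + 1 ∧ e.2.val ≤ q + ℓ := by
    intro e he; exact (Finset.mem_filter.mp he).2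
  have hc1 := Finset.card_le_card hcover
  have hc2 := Finset.card_union_le X Y
  rcases Nat.lt_or_ge ℓ 2 with hℓ2 | hℓ2
  · have hℓ : ℓ = 1 := by omega
    subst hℓ
    have hXcons : ∀ e ∈ X, ∀ e' ∈ X, (fun e : Fin n × Fin n => e.1.val) e' ≠
        (fun e : Fin n × Fin n => e.1.val) e + 1 := by
      intro e he e' he' h
      have := hpair e (hXO he) e' (hXO he') h
      omega
    have hYcons : ∀ e ∈ Y, ∀ e' ∈ Y, (fun e : Fin n × Fin n => e.2.val) e' ≠
        (fun e : Fin n × Fin n => e.2.val) e + 1 := by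
      intro e he e' he' h
      have h1 := hO4 e (hYO he) e' (hYO he') h
      have := hpair e (hYO he) e' (hYO he') h1
      omega
    have hX2 : X.card ≤ 2 :=
      card_le_two_of_window (f := fun e => e.1.val) hXdist hXwin hXcons
    have hY2 : Y.card ≤ 2 :=
      card_le_two_of_window (f := fun e => e.2.val) hYdist hYwin hYcons
    omega
  · have hXb : X.card ≤ ℓ + 2 :=
      card_le_of_window (f := fun e => e.1.val) hXdist hXwin
    have hYb : Y.card ≤ ℓ + 2 :=
      card_le_of_window (f := fun e => e.2.val) hYdist hYwin
    omega

/-- The set of edges charged to step `i` of the greedy procedure. -/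
def ChargedTo {n : ℕ} (s : ℕ → Finset (Fin n × Fin n)) (i : ℕ) (e : Fin n × Fin n) : Prop :=
  (∃ e' ∈ s i, Overlap e e') ∧ ∀ j < i, ¬ ∃ e' ∈ s j, Overlap e e'

instance {n : ℕ} (s : ℕ → Finset (Fin n × Fin n)) (i : ℕ) (e : Fin n × Fin n) :
    Decidable (ChargedTo s i e) := by
  unfold ChargedTo; infer_instance

end Helpers

/-- a greedy sequence with threshold 1 that exhausts the graph
(every edge of `E` overlaps some chosen edge) yields a consecutive matching
`ALG` in `E` with `4|ALG| ≥ |O|` for every consecutive matching `O` in `E`. -/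

theorem greedy_4_approx {n : ℕ} (hn : 1 ≤ n)
    (E : Finset (Fin n × Fin n)) (m : ℕ) (s : ℕ → Finset (Fin n × Fin n))
    (hgreedy : GreedySeq E 1 m s)
    (hexhaust : ∀ e ∈ E, ∃ i < m, ∃ e' ∈ s i, Overlap e e') :
    ConsecMatching E ((Finset.range m).biUnion s) ∧
    ∀ O : Finset (Fin n × Fin n), ConsecMatching E O →
      4 * ((Finset.range m).biUnion s).card ≥ O.card := by
  unfold GreedySeq at hgreedy
  set A := (Finset.range m).biUnion s with hA
  have hrun : ∀ i < m, ∃ p q ℓ, 1 ≤ ℓ ∧ IsRunAt (s i) p q ℓ := by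
    intro i hi
    obtain ⟨-, ⟨ℓ, hℓ, hIR⟩, -⟩ := hgreedy i hi
    unfold IsRun at hIR
    obtain ⟨p, q, hr⟩ := hIR
    exact ⟨p, q, ℓ, hℓ, hr⟩
  have hsubE : ∀ i < m, s i ⊆ E := by
    intro i hi e he
    exact (Finset.mem_filter.mp ((hgreedy i hi).1 he)).1
  have hnov : ∀ j, ∀ i < m, j < i → ∀ e ∈ s i, ∀ e' ∈ s j, ¬ Overlap e e' := by
    intro j i hi hji e he e' he'
    exact (Finset.mem_filter.mp ((hgreedy i hi).1 he)).2 j hji e' he'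
  have hnov' : ∀ i < m, ∀ j < m, i ≠ j → ∀ e ∈ s i, ∀ e' ∈ s j, ¬ Overlap e e' := by
    intro i hi j hj hij e he e' he' hov
    rcases Nat.lt_or_ge i j with h | h
    · exact hnov i j hj h e' he' e he (overlap_symm hov)
    · exact hnov j i hi (by omega) e he e' he' hov
  have hmemA : ∀ e, e ∈ A ↔ ∃ i < m, e ∈ s i := by
    intro e
    simp [hA, Finset.mem_biUnion]
  have hALG : ConsecMatching E A := by
    refine ⟨?_, ?_, ?_, ?_⟩
    · intro e he
      obtain ⟨i, hi, hei⟩ := (hmemA e).mp he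
      exact hsubE i hi hei
    · intro e he e' he' hne
      obtain ⟨i, hi, hei⟩ := (hmemA e).mp he
      obtain ⟨j, hj, hej⟩ := (hmemA e').mp he'
      by_cases hij : i = j
      · subst hij
        obtain ⟨p, q, ℓ, -, -, -, hm⟩ := hrun i hi
        obtain ⟨r, hr, h1, h2⟩ := (hm e).mp hei
        obtain ⟨r', hr', h1', h2'⟩ := (hm e').mp hej
        have hrr : r ≠ r' := by
          rintro rfl
          exact hne (pair_ext (by omega) (by omega))
        constructor
        · intro h; have := congrArg Fin.val h; omega
        · intro h; have := congrArg Fin.val h; omega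
      · have hov := hnov' i hi j hj hij e hei e' hej
        unfold Overlap at hov
        push_neg at hov
        constructor
        · intro h; have := congrArg Fin.val h; omega
        · intro h; have := congrArg Fin.val h; omega
    · intro e he e' he' h1
      obtain ⟨i, hi, hei⟩ := (hmemA e).mp he
      obtain ⟨j, hj, hej⟩ := (hmemA e').mp he'
      by_cases hij : i = j
      · subst hij
        obtain ⟨p, q, ℓ, -, -, -, hm⟩ := hrun i hi
        obtain ⟨r, hr, ha, hb⟩ := (hm e).mp hei
        obtain ⟨r', hr', ha', hb'⟩ := (hm e').mp hej
        omega
      · exfalso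
        apply hnov' i hi j hj hij e hei e' hej
        unfold Overlap
        left; omega
    · intro e he e' he' h1
      obtain ⟨i, hi, hei⟩ := (hmemA e).mp he
      obtain ⟨j, hj, hej⟩ := (hmemA e').mp he'
      by_cases hij : i = j
      · subst hij
        obtain ⟨p, q, ℓ, -, -, -, hm⟩ := hrun i hi
        obtain ⟨r, hr, ha, hb⟩ := (hm e).mp hei
        obtain ⟨r', hr', ha', hb'⟩ := (hm e').mp hej
        omega
      · exfalso
        apply hnov' i hi j hj hij e hei e' hej
        unfold Overlap
        right; omega
  refine ⟨hALG, ?_⟩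
  intro O hO
  obtain ⟨hOE, hOm, hO3, hO4⟩ := hO
  have hAcard : A.card = ∑ i ∈ Finset.range m, (s i).card := by
    apply Finset.card_biUnion
    intro i hi j hj hij
    simp only [Finset.coe_range, Set.mem_Iio, Finset.mem_range] at hi hj
    refine Finset.disjoint_left.mpr ?_
    intro e hei hej
    exact hnov' i hi j hj hij e hei e hej (overlap_self e)
  have hP : ∀ e ∈ O, ∃ i < m, ChargedTo s i e := by
    intro e he
    obtain ⟨i0, hi0, hw⟩ := hexhaust e (hOE he)
    have hex : ∃ i, ∃ e' ∈ s i, Overlap e e' := ⟨i0, hw⟩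
    refine ⟨Nat.find hex, lt_of_le_of_lt (Nat.find_min' hex hw) hi0,
      Nat.find_spec hex, fun j hj => Nat.find_min hex hj⟩
  have hcover : O ⊆ (Finset.range m).biUnion (fun i => O.filter (ChargedTo s i)) := by
    intro e he
    obtain ⟨i, him, hPi⟩ := hP e he
    exact Finset.mem_biUnion.mpr ⟨i, Finset.mem_range.mpr him,
      Finset.mem_filter.mpr ⟨he, hPi⟩⟩
  have hOcard : O.card ≤ ∑ i ∈ Finset.range m, (O.filter (ChargedTo s i)).card :=
    le_trans (Finset.card_le_card hcover) Finset.card_biUnion_le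
  have hkey : ∀ i ∈ Finset.range m,
      (O.filter (ChargedTo s i)).card ≤ 4 * (s i).card := by
    intro i hi'
    rw [Finset.mem_range] at hi'
    obtain ⟨hsubF, ⟨ℓ, hℓ1, hIR⟩, hmax⟩ := hgreedy i hi'
    unfold IsRun at hIR
    obtain ⟨p, q, hRA⟩ := hIR
    have hsubO : O.filter (ChargedTo s i) ⊆ O := Finset.filter_subset _ _
    apply per_index_bound hℓ1 hRA hmax
    · intro e he e' he' hne
      exact hOm e (hsubO he) e' (hsubO he') hne
    · intro e he e' he' h
      exact hO3 e (hsubO he) e' (hsubO he') h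
    · intro e he e' he' h
      exact hO4 e (hsubO he) e' (hsubO he') h
    · intro e he
      obtain ⟨heO, hc⟩ := Finset.mem_filter.mp he
      unfold ChargedTo at hc
      refine Finset.mem_filter.mpr ⟨hOE heO, ?_⟩
      intro j hj e' he' hov
      exact hc.2 j hj ⟨e', he', hov⟩
    · intro e he
      have hc := (Finset.mem_filter.mp he).2
      unfold ChargedTo at hc
      exact hc.1
  have hsum : ∑ i ∈ Finset.range m, (O.filter (ChargedTo s i)).card ≤
      ∑ i ∈ Finset.range m, 4 * (s i).card := Finset.sum_le_sum hkey
  have hmul : ∑ i ∈ Finset.range m, 4 * (s i).card = 4 * A.card := by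
    rw [hAcard, Finset.mul_sum]
  omega
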